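/- Let h : ℝⁿ → ℝ and Δh : ℝⁿ → ℝ be continuous functions, let γ > 0, and define D := {x ∈ ℝⁿ | h(x) ≤ γ} and S := {x ∈ ℝⁿ | h(x) ≤ 0}. Assume D is compact and Δh(x) > 0 for all x ∈ D with h(x) > 0. Suppose a sequence x : ℕ → ℝⁿ satisfies h(x(0)) ≤ γ and, for every t ∈ ℕ: if h(x(t)) ≤ 0 then h(x(t+1)) ≤ 0, and if 0 < h(x(t)) ≤ γ then h(x(t+1)) ≤ h(x(t)) − Δh(x(t)). Then for every δ > 0 there exists T ∈ ℕ such that h(x(t)) ≤ δ for all t ≥ T; in particular, if additionally inf{Δh(x) | x ∈ D, h(x) > 0} > 0, then there exists T with h(x(t)) ≤ 0 for all t ≥ T. -/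

import Mathlib

/-- Recovery guarantee of a discrete-time CBF: any trajectory starting in the
domain `D = {x | h x ≤ γ}` that satisfies the CBF step conditions has `h(x(t))` eventually
below any `δ > 0`; if moreover the infimum of `Δh` over `{x ∈ D | h x > 0}` is positive,
the trajectory reaches the safe set `S = {x | h x ≤ 0}` in finite time and stays there. -/
theorem stmt_1 {n : ℕ} (h : (Fin n → ℝ) → ℝ) (hcont : Continuous h)
    (Δh : (Fin n → ℝ) → ℝ) (hΔcont : Continuous Δh)
    (γ : ℝ) (hγ : 0 < γ)
    (D : Set (Fin n → ℝ)) (hD : D = {x | h x ≤ γ})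
    (S : Set (Fin n → ℝ)) (hS : S = {x | h x ≤ 0})
    (hDcompact : IsCompact D)
    (hΔpos : ∀ y ∈ D, 0 < h y → 0 < Δh y)
    (x : ℕ → Fin n → ℝ) (hx0 : h (x 0) ≤ γ)
    (hsafe : ∀ t, h (x t) ≤ 0 → h (x (t + 1)) ≤ 0)
    (hdec : ∀ t, 0 < h (x t) → h (x t) ≤ γ →
      h (x (t + 1)) ≤ h (x t) - Δh (x t)) :
    (∀ δ > (0 : ℝ), ∃ T : ℕ, ∀ t ≥ T, h (x t) ≤ δ) ∧
      (0 < sInf (Δh '' {y | y ∈ D ∧ 0 < h y}) →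
        ∃ T : ℕ, ∀ t ≥ T, h (x t) ≤ 0) := by
  -- invariance of the domain
  have hmemD : ∀ y, h y ≤ γ → y ∈ D := by intro y hy; rw [hD]; exact hy
  have hinv : ∀ t, h (x t) ≤ γ := by
    intro t
    induction t with
    | zero => exact hx0
    | succ t ih =>
      rcases le_or_gt (h (x t)) 0 with h0 | h0
      · exact le_trans (hsafe t h0) hγ.le
      · have hΔ := hΔpos (x t) (hmemD _ ih) h0
        have := hdec t h0 ih
        linarith
  -- once below a positive level δ, stays below δ
  have hstay : ∀ δ : ℝ, 0 < δ → ∀ t, h (x t) ≤ δ → h (x (t + 1)) ≤ δ := by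
    intro δ hδ t ht
    rcases le_or_gt (h (x t)) 0 with h0 | h0
    · exact le_trans (hsafe t h0) hδ.le
    · have hΔ := hΔpos (x t) (hmemD _ (hinv t)) h0
      have := hdec t h0 (hinv t)
      linarith
  have hstayAll : ∀ δ : ℝ, 0 < δ → ∀ T, h (x T) ≤ δ → ∀ t ≥ T, h (x t) ≤ δ := by
    intro δ hδ T hT t ht
    induction t, ht using Nat.le_induction with
    | base => exact hT
    | succ t ht ih => exact hstay δ hδ t ih
  -- first part
  have part1 : ∀ δ > (0 : ℝ), ∃ T : ℕ, ∀ t ≥ T, h (x t) ≤ δ := by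
    intro δ hδ
    rcases le_or_gt γ δ with hle | hlt
    · exact ⟨0, fun t _ => le_trans (hinv t) hle⟩
    · -- compact set of "bad" states
      set K : Set (Fin n → ℝ) := {y | δ ≤ h y ∧ h y ≤ γ} with hK
      have hKsub : K ⊆ D := by intro y hy; exact hmemD y hy.2
      have hKclosed : IsClosed K := by
        have : K = h ⁻¹' (Set.Icc δ γ) := by ext y; simp [hK, Set.mem_Icc]
        rw [this]; exact isClosed_Icc.preimage hcont
      have hKcompact : IsCompact K := hDcompact.of_isClosed_subset hKclosed hKsub
      rcases Set.eq_empty_or_nonempty K with hemp | hne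
      · refine ⟨0, fun t _ => ?_⟩
        by_contra hgt
        push_neg at hgt
        have : x t ∈ K := ⟨hgt.le, hinv t⟩
        rw [hemp] at this
        exact this
      · obtain ⟨y0, hy0K, hy0min⟩ := hKcompact.exists_isMinOn hne hΔcont.continuousOn
        set ε := Δh y0 with hε
        have hεpos : 0 < ε := hΔpos y0 (hKsub hy0K) (lt_of_lt_of_le hδ hy0K.1)
        -- find a time where h drops below δ
        have hreach : ∃ t, h (x t) ≤ δ := by
          by_contra hnot
          push_neg at hnot
          have hbound : ∀ t : ℕ, h (x t) ≤ γ - t * ε := by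
            intro t
            induction t with
            | zero => simpa using hinv 0
            | succ t ih =>
              have hxK : x t ∈ K := ⟨(hnot t).le, hinv t⟩
              have hεle : ε ≤ Δh (x t) := hy0min hxK
              have := hdec t (lt_trans hδ (hnot t)) (hinv t)
              push_cast
              linarith
          obtain ⟨N, hN⟩ := exists_nat_gt ((γ - δ) / ε)
          have : (γ - δ) < N * ε := by
            rw [div_lt_iff₀ hεpos] at hN; linarith
          have := hbound N
          have := hnot N
          linarith
        obtain ⟨T, hT⟩ := hreach
        exact ⟨T, hstayAll δ hδ T hT⟩
  refine ⟨part1, ?_⟩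
  intro hm
  set m := sInf (Δh '' {y | y ∈ D ∧ 0 < h y}) with hmdef
  have hbdd : BddBelow (Δh '' {y | y ∈ D ∧ 0 < h y}) :=
    ((hDcompact.image hΔcont).bddBelow).mono (Set.image_mono (fun y hy => hy.1))
  have hmle : ∀ y ∈ D, 0 < h y → m ≤ Δh y := by
    intro y hy hpos
    exact csInf_le hbdd ⟨y, ⟨hy, hpos⟩, rfl⟩
  obtain ⟨T, hT⟩ := part1 (m / 2) (by linarith)
  have hT1 : h (x (T + 1)) ≤ 0 := by
    rcases le_or_gt (h (x T)) 0 with h0 | h0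
    · exact hsafe T h0
    · have hle := hmle (x T) (hmemD _ (hinv T)) h0
      have := hdec T h0 (hinv T)
      have := hT T le_rfl
      linarith
  refine ⟨T + 1, fun t ht => ?_⟩
  induction t, ht using Nat.le_induction with
  | base => exact hT1
  | succ t ht ih => exact hsafe t ih
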